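/- Let G be a graph with maximum degree at most 5, let c be a partial acyclic colouring of G with 5 colours whose colour classes induce forests, and let v be an uncoloured vertex with at most 4 coloured neighbours. Then the colouring c can be modified (possibly recolouring some already-coloured vertices) and extended to v so that the result is again a partial acyclic 5-colouring whose colour classes induce forests, with domain enlarged by v. -/

import Mathlib

/-- The subgraph of `G` consisting of edges with one endpoint coloured `i`
and the other coloured `j`. -/
def bicol {V α : Type*} (G : SimpleGraph V) (c : V → α) (i j : α) : SimpleGraph V where
  Adj u w := G.Adj u w ∧ ((c u = i ∧ c w = j) ∨ (c u = j ∧ c w = i))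
  symm := ⟨fun u w h => ⟨h.1.symm, h.2.symm.imp And.symm And.symm⟩⟩
  loopless := ⟨fun u h => G.irrefl h.1⟩

/-- A partial acyclic 5-colouring whose colour classes induce forests. -/
def pGood {V : Type*} (G : SimpleGraph V) (c : V → Option (Fin 5)) : Prop :=
  (∀ i : Fin 5, (G.induce {x | c x = some i}).IsAcyclic) ∧
  (∀ i j : Fin 5, i ≠ j →
    (bicol G c (some i) (some j)).IsAcyclic)

namespace Stmt4

open SimpleGraph Walk

variable {V : Type*}

/-- the graph `H` with all edges at `w` removed -/
def avoidV (H : SimpleGraph V) (w : V) : SimpleGraph V where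
  Adj a b := H.Adj a b ∧ a ≠ w ∧ b ≠ w
  symm := ⟨fun a b h => ⟨h.1.symm, h.2.2, h.2.1⟩⟩
  loopless := ⟨fun a h => H.irrefl h.1⟩

lemma bicol_comm (G : SimpleGraph V) {α : Type*} (c : V → α) (i j : α) :
    bicol G c i j = bicol G c j i := by
  ext a b
  show G.Adj a b ∧ _ ↔ G.Adj a b ∧ _
  tauto

lemma bicol_mono_colour {G : SimpleGraph V} {c : V → Option (Fin 5)} {i : Fin 5} {a b : V}
    (h : (bicol G c (some i) (some i)).Adj a b) : c a = some i ∧ c b = some i := by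
  rcases h.2 with ⟨h1, h2⟩ | ⟨h1, h2⟩ <;> exact ⟨h1, h2⟩

section lift

variable {G : SimpleGraph V} {c : V → Option (Fin 5)} {i : Fin 5}

private def M (G : SimpleGraph V) (c : V → Option (Fin 5)) (i : Fin 5) : SimpleGraph V :=
  bicol G c (some i) (some i)

lemma M_colour {a b : V} (h : (M G c i).Adj a b) : c a = some i ∧ c b = some i :=
  bicol_mono_colour h

/-- lift a walk in the monochromatic bicol graph to the induced subgraph on the colour class -/
def liftW : {a b : V} → (ρ : (M G c i).Walk a b) → (ha : a ∈ {x | c x = some i}) →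
    (hb : b ∈ {x | c x = some i}) →
    (G.induce {x | c x = some i}).Walk ⟨a, ha⟩ ⟨b, hb⟩
  | _, _, SimpleGraph.Walk.nil, _, _ => SimpleGraph.Walk.nil
  | _, _, SimpleGraph.Walk.cons h ρ', ha, hb =>
    SimpleGraph.Walk.cons (by exact h.1) (liftW ρ' (M_colour h).2 hb)

lemma liftW_support_map : ∀ {a b : V} (ρ : (M G c i).Walk a b) (ha hb),
    ((liftW ρ ha hb).support.map Subtype.val) = ρ.support
  | _, _, SimpleGraph.Walk.nil, _, _ => rfl
  | _, _, SimpleGraph.Walk.cons h ρ', ha, hb => by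
    show (_ :: (liftW ρ' (M_colour h).2 hb).support).map Subtype.val = _ :: ρ'.support
    rw [List.map_cons, liftW_support_map ρ' (M_colour h).2 hb]

lemma liftW_edges_map : ∀ {a b : V} (ρ : (M G c i).Walk a b) (ha hb),
    ((liftW ρ ha hb).edges.map (Sym2.map Subtype.val)) = ρ.edges
  | _, _, SimpleGraph.Walk.nil, _, _ => rfl
  | _, _, SimpleGraph.Walk.cons h ρ', ha, hb => by
    show (_ :: (liftW ρ' (M_colour h).2 hb).edges).map (Sym2.map Subtype.val) = _ :: ρ'.edges
    rw [List.map_cons, liftW_edges_map ρ' (M_colour h).2 hb]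
    rfl

lemma mono_isAcyclic (hind : (G.induce {x | c x = some i}).IsAcyclic) :
    (M G c i).IsAcyclic := by
  intro u ρ hρ
  cases ρ with
  | nil => exact hρ.ne_nil rfl
  | cons h ρ' =>
    have hu : c u = some i := (M_colour h).1
    set ρ₀ : (M G c i).Walk u u := SimpleGraph.Walk.cons h ρ' with hρ₀
    apply hind (liftW ρ₀ hu hu)
    constructor
    · constructor
      · constructor
        have := hρ.isTrail.edges_nodup
        rw [← liftW_edges_map ρ₀ hu hu] at this
        exact this.of_map _
      · show liftW ρ₀ hu hu ≠ SimpleGraph.Walk.nil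
        rw [hρ₀]
        intro hh
        exact absurd (congrArg SimpleGraph.Walk.length hh) (by simp [liftW]; exact nofun)
    · have h2 : ((liftW ρ₀ hu hu).support.tail).map Subtype.val = ρ₀.support.tail := by
        rw [← liftW_support_map ρ₀ hu hu]
        exact List.map_tail
      have := hρ.support_nodup
      rw [← h2] at this
      exact this.of_map _

/-- the converse direction: a cycle in the induced colour class maps to the mono bicol graph -/
lemma induce_isAcyclic (hM : (M G c i).IsAcyclic) :
    (G.induce {x | c x = some i}).IsAcyclic := by
  intro u ρ hρ
  let f : G.induce {x | c x = some i} →g M G c i :=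
    ⟨Subtype.val, by
      rintro ⟨a, ha⟩ ⟨b, hb⟩ hab
      exact ⟨hab, Or.inl ⟨ha, hb⟩⟩⟩
  exact hM (ρ.map f) ((SimpleGraph.Walk.map_isCycle_iff_of_injective (f := f) Subtype.val_injective).mpr hρ)

lemma pGood_iff_allB {G : SimpleGraph V} {c : V → Option (Fin 5)} :
    pGood G c ↔ ∀ i j : Fin 5, (bicol G c (some i) (some j)).IsAcyclic := by
  constructor
  · rintro ⟨h1, h2⟩ i j
    by_cases hij : i = j
    · subst hij; exact mono_isAcyclic (h1 i)
    · exact h2 i j hij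
  · intro h
    exact ⟨fun i => induce_isAcyclic (h i i), fun i j _ => h i j⟩

end lift

section surgery

variable {G : SimpleGraph V} {c : V → Option (Fin 5)} {w : V} {k : Fin 5}

open Classical in
noncomputable def upd (c : V → Option (Fin 5)) (w : V) (k : Fin 5) : V → Option (Fin 5) :=
  fun x => if x = w then some k else c x

lemma upd_self : upd c w k w = some k := by simp [upd]

lemma upd_ne {x : V} (h : x ≠ w) : upd c w k x = c x := by simp [upd, h]

/-- The condition allowing us to (re)colour `w` with colour `k`. -/
def Good (G : SimpleGraph V) (c : V → Option (Fin 5)) (w : V) (k : Fin 5) : Prop :=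
  ∀ (j : Fin 5) (p q : V), G.Adj w p → G.Adj w q → p ≠ q → c p = some j → c q = some j →
    ¬ (avoidV (bicol G c (some k) (some j)) w).Reachable p q

lemma reach_avoid_of_walk {H H' : SimpleGraph V} {w y x : V} (r : H'.Walk y x)
    (hsub : ∀ a b, H'.Adj a b → a ≠ w → b ≠ w → H.Adj a b)
    (hw : w ∉ r.support) : (avoidV H w).Reachable y x := by
  induction r with
  | nil => exact SimpleGraph.Reachable.refl _
  | @cons a b x h r ih =>
    rw [SimpleGraph.Walk.support_cons, List.mem_cons] at hw
    push_neg at hw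
    have hb : b ≠ w := fun hbw => hw.2 (hbw ▸ r.start_mem_support)
    have ha : a ≠ w := fun haw => hw.1 haw.symm
    have hadj : (avoidV H w).Adj a b := ⟨hsub a b h ha hb, ha, hb⟩
    exact hadj.reachable.trans (ih hw.2)

lemma surgery (hc : pGood G c) (hg : Good G c w k) : pGood G (upd c w k) := by
  classical
  rw [pGood_iff_allB] at hc ⊢
  intro i j u ρ hρ
  by_cases hw : w ∈ ρ.support
  · -- rotate the cycle to start at w
    have hq := hρ.rotate hw
    set q : (bicol G (upd c w k) (some i) (some j)).Walk w w := ρ.rotate w hw with hqdef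
    clear_value q
    clear hqdef hρ hw
    revert hq
    cases q with
    | nil => intro hq; exact hq.ne_nil rfl
    | @cons _ x _ h1 q' =>
      intro hq
      have hwx : w ≠ x := h1.1.ne
      -- decompose the end of q'
      obtain ⟨y, h2, r', hrev⟩ : ∃ (y : V) (h2 : (bicol G (upd c w k) (some i) (some j)).Adj w y)
          (r' : (bicol G (upd c w k) (some i) (some j)).Walk y x),
          q'.reverse = SimpleGraph.Walk.cons h2 r' := by
        cases hrev : q'.reverse with
        | nil => exact absurd rfl hwx
        | cons h2 r' => exact ⟨_, h2, r', rfl⟩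
      have hnd : q'.support.Nodup := by
        have := hq.support_nodup
        rwa [SimpleGraph.Walk.support_cons, List.tail_cons] at this
      have hwr : w ∉ r'.support := by
        have he : q'.support.reverse = w :: r'.support := by
          rw [← SimpleGraph.Walk.support_reverse, hrev, SimpleGraph.Walk.support_cons]
        have : (w :: r'.support).Nodup := he ▸ (List.nodup_reverse.mpr hnd)
        exact (List.nodup_cons.mp this).1
      have hxy : x ≠ y := by
        intro hxyeq
        have hmem : s(w, y) ∈ q'.edges := by
          have : q'.reverse.edges = s(w, y) :: r'.edges := by
            rw [hrev, SimpleGraph.Walk.edges_cons]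
          have h' : s(w, y) ∈ q'.reverse.edges := by rw [this]; exact List.mem_cons_self
          rwa [SimpleGraph.Walk.edges_reverse, List.mem_reverse] at h'
        have hnd2 := hq.edges_nodup
        rw [SimpleGraph.Walk.edges_cons] at hnd2
        subst hxyeq
        exact (List.nodup_cons.mp hnd2).1 hmem
      have hwy : w ≠ y := h2.1.ne
      have hcw : upd c w k w = some k := upd_self
      -- colour analysis
      have hyj : ∀ jw : Fin 5, (upd c w k w = some jw ∧ upd c w k x = some (if True then j else j)) → True := fun _ _ => trivial
      -- case on the colour pattern of the first edge
      have hAdjwx : G.Adj w x := h1.1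
      have hAdjwy : G.Adj w y := h2.1
      have hreach : ∀ (oi' oj' : Option (Fin 5)),
          (bicol G (upd c w k) (some i) (some j)) = (bicol G (upd c w k) oi' oj') →
          True := fun _ _ _ => trivial
      clear hyj hreach
      have hsub : ∀ a b, (bicol G (upd c w k) (some i) (some j)).Adj a b → a ≠ w → b ≠ w →
          (bicol G c (some i) (some j)).Adj a b := by
        intro a b hab ha hb
        refine ⟨hab.1, ?_⟩
        have h := hab.2
        rwa [upd_ne ha, upd_ne hb] at h
      have hR : (avoidV (bicol G c (some i) (some j)) w).Reachable x y :=
        ((reach_avoid_of_walk r' hsub hwr)).symm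
      rcases h1.2 with ⟨hwi, hxj⟩ | ⟨hwj, hxi⟩
      · -- k = i, x coloured j
        have hki : k = i := by simpa [upd_self] using hwi
        have hyj : upd c w k y = some j := by
          rcases h2.2 with ⟨_, h⟩ | ⟨hwj2, h⟩
          · exact h
          · have : i = j := by rw [hki] at hwj2; simpa [upd_self] using hwj2
            rw [h, this]
        have hcx : c x = some j := by rwa [upd_ne hwx.symm] at hxj
        have hcy : c y = some j := by rwa [upd_ne hwy.symm] at hyj
        exact hg j x y hAdjwx hAdjwy hxy hcx hcy (by rwa [hki])
      · -- k = j, x coloured i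
        have hkj : k = j := by simpa [upd_self] using hwj
        have hyi : upd c w k y = some i := by
          rcases h2.2 with ⟨hwi2, h⟩ | ⟨_, h⟩
          · have : j = i := by rw [hkj] at hwi2; simpa [upd_self] using hwi2
            rw [h, this]
          · exact h
        have hcx : c x = some i := by rwa [upd_ne hwx.symm] at hxi
        have hcy : c y = some i := by rwa [upd_ne hwy.symm] at hyi
        refine hg i x y hAdjwx hAdjwy hxy hcx hcy ?_
        rw [hkj, bicol_comm]
        exact hR
  · -- the cycle avoids w : transfer it to the old bicol graph
    have hp : ∀ e ∈ ρ.edges, e ∈ (bicol G c (some i) (some j)).edgeSet := by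
      intro e he
      induction e with
      | _ a b =>
        have ha : a ∈ ρ.support := ρ.fst_mem_support_of_mem_edges he
        have hb : b ∈ ρ.support := ρ.snd_mem_support_of_mem_edges he
        have haw : a ≠ w := fun h => hw (h ▸ ha)
        have hbw : b ≠ w := fun h => hw (h ▸ hb)
        have hab := ρ.adj_of_mem_edges he
        refine ⟨hab.1, ?_⟩
        have h := hab.2
        rwa [upd_ne haw, upd_ne hbw] at h
    exact hc i j (ρ.transfer _ hp) (hρ.transfer hp)

end surgery

open scoped Classical

section counting

open Finset

variable [Fintype V] (G : SimpleGraph V) (c : V → Option (Fin 5))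

/-- `p` has a `k`-coloured neighbour other than `u`. -/
def hasx (p u : V) (k : Fin 5) : Prop := ∃ y, G.Adj p y ∧ y ≠ u ∧ c y = some k

/-- coloured neighbours of `p` other than `u` -/
noncomputable def CNf (p u : V) : Finset V :=
  Finset.univ.filter (fun y => G.Adj p y ∧ y ≠ u ∧ (c y).isSome)

/-- the colours appearing on neighbours of `p` other than `u` -/
noncomputable def CSf (p u : V) : Finset (Fin 5) :=
  Finset.univ.filter (fun k => hasx G c p u k)

/-- no two coloured neighbours of `w` share a colour -/
def Free (w : V) : Prop :=
  ∀ ⦃p q : V⦄, G.Adj w p → G.Adj w q → (c p).isSome → c p = c q → p = q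

variable {G c}

lemma ncard_setOf_eq_card_filter (p : V → Prop) :
    {x | p x}.ncard = (Finset.univ.filter p).card := by
  rw [Set.ncard_eq_toFinset_card']
  congr 1
  ext x
  simp

lemma mem_CNf {p u z : V} : z ∈ CNf G c p u ↔ G.Adj p z ∧ z ≠ u ∧ (c z).isSome := by
  simp [CNf]

lemma good_of_free {w : V} (h : Free G c w) (k : Fin 5) : Good G c w k := by
  intro j p q hp hq hpq hcp hcq _
  exact hpq (h hp hq (by rw [hcp]; rfl) (by rw [hcp, hcq]))

lemma firststep {w p q : V} {k j : Fin 5}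
    (hre : (avoidV (bicol G c (some k) (some j)) w).Reachable p q)
    (hpq : p ≠ q) (hp : c p = some j) : hasx G c p w k := by
  obtain ⟨r⟩ := hre
  cases r with
  | nil => exact absurd rfl hpq
  | @cons _ b _ h r' =>
    obtain ⟨hadj, hpw, hbw⟩ := h
    rcases hadj.2 with ⟨h1, h2⟩ | ⟨h1, h2⟩
    · have : j = k := by rw [hp] at h1; exact (Option.some.injEq _ _ ▸ h1 : _)
      exact ⟨b, hadj.1, hbw, by rw [h2, ← this]⟩
    · exact ⟨b, hadj.1, hbw, h2⟩

lemma bad_pair {w : V} {k : Fin 5} (h : ¬ Good G c w k) :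
    ∃ j p q, G.Adj w p ∧ G.Adj w q ∧ p ≠ q ∧ c p = some j ∧ c q = some j ∧
      hasx G c p w k ∧ hasx G c q w k := by
  unfold Good at h
  push_neg at h
  obtain ⟨j, p, q, hp, hq, hpq, hcp, hcq, hre⟩ := h
  exact ⟨j, p, q, hp, hq, hpq, hcp, hcq, firststep hre hpq hcp,
    firststep hre.symm hpq.symm hcq⟩

variable (hΔ : ∀ w : V, (G.neighborSet w).ncard ≤ 5)

include hΔ in
lemma cnf_le4 {p u : V} (hadj : G.Adj p u) : (CNf G c p u).card ≤ 4 := by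
  have h5 : (Finset.univ.filter (fun y => G.Adj p y)).card ≤ 5 := by
    have := hΔ p
    rwa [show G.neighborSet p = {x | G.Adj p x} from rfl,
      ncard_setOf_eq_card_filter] at this
  have hsub : insert u (CNf G c p u) ⊆ Finset.univ.filter (fun y => G.Adj p y) := by
    intro y hy
    rcases Finset.mem_insert.mp hy with rfl | hy
    · simp [hadj]
    · simp only [CNf, Finset.mem_filter] at hy ⊢
      exact ⟨Finset.mem_univ _, hy.2.1⟩
  have hnm : u ∉ CNf G c p u := by simp [CNf]
  have := Finset.card_le_card hsub
  rw [Finset.card_insert_of_notMem hnm] at this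
  omega

lemma csf_le_image {p u : V} : (CSf G c p u).card ≤ ((CNf G c p u).image c).card := by
  apply Finset.card_le_card_of_injOn (fun k => some k)
  · intro k hk
    have hk' : hasx G c p u k := by simpa [CSf] using hk
    obtain ⟨y, hy1, hy2, hy3⟩ := hk'
    exact Finset.mem_coe.mpr <| Finset.mem_image.mpr ⟨y, by simp [CNf, hy1, hy2, hy3], hy3⟩
  · intro a _ b _ h
    exact Option.some_injective _ h

lemma free_of_injOn {u : V} (hv : ∀ y, G.Adj u y → (c y).isSome → y ≠ u → y ∈ CNf G c u u)
    (hinj : Set.InjOn c (CNf G c u u)) : Free G c u := by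
  intro p q hp hq hps hpq
  have hqs : (c q).isSome := by rw [← hpq]; exact hps
  exact hinj (hv p hp hps hp.ne') (hv q hq hqs hq.ne') hpq

include hΔ in
lemma free_of_wits {p u : V} {a : Fin 5} (hadj : G.Adj p u) (hcu : c u = some a)
    (hw : ∀ k, k ≠ a → hasx G c p u k) : Free G c p := by
  set T := insert u (CNf G c p u) with hT
  have hTcard : T.card ≤ 5 := by
    have := cnf_le4 (c := c) hΔ hadj
    have hnm : u ∉ CNf G c p u := by simp [CNf]
    rw [hT, Finset.card_insert_of_notMem hnm]
    omega
  have hsubim : Finset.univ.image (some : Fin 5 → Option (Fin 5)) ⊆ T.image c := by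
    intro o ho
    obtain ⟨k, _, rfl⟩ := Finset.mem_image.mp ho
    by_cases hk : k = a
    · exact Finset.mem_image.mpr ⟨u, by simp [hT], by rw [hcu, hk]⟩
    · obtain ⟨y, hy1, hy2, hy3⟩ := hw k hk
      refine Finset.mem_image.mpr ⟨y, ?_, hy3⟩
      simp only [hT, Finset.mem_insert, CNf, Finset.mem_filter]
      exact Or.inr ⟨Finset.mem_univ _, hy1, hy2, by rw [hy3]; rfl⟩
  have h5 : (5 : ℕ) ≤ (T.image c).card := by
    have h51 : (Finset.univ.image (some : Fin 5 → Option (Fin 5))).card = 5 := by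
      rw [Finset.card_image_of_injective _ (Option.some_injective _)]
      simp
    calc (5:ℕ) = (Finset.univ.image (some : Fin 5 → Option (Fin 5))).card := h51.symm
      _ ≤ (T.image c).card := Finset.card_le_card hsubim
  have hinj : Set.InjOn c T := by
    apply Finset.injOn_of_card_image_eq
    have := Finset.card_image_le (s := T) (f := c)
    omega
  intro r s hr hs hrs hcrs
  have hrT : ∀ z, G.Adj p z → (c z).isSome → z ∈ T := by
    intro z hz hzs
    by_cases hzu : z = u
    · simp [hT, hzu]
    · simp only [hT, Finset.mem_insert, CNf, Finset.mem_filter]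
      exact Or.inr ⟨Finset.mem_univ _, hz, hzu, hzs⟩
  have hss : (c s).isSome := by rw [← hcrs]; exact hrs
  exact hinj (hrT r hr hrs) (hrT s hs hss) hcrs

lemma unique_dup {s : Finset V} {f : V → Option (Fin 5)}
    (hcard : s.card ≤ (s.image f).card + 1) (hninj : ¬ Set.InjOn f s) :
    ∃ p q, p ∈ s ∧ q ∈ s ∧ p ≠ q ∧ f p = f q ∧
      ∀ r t, r ∈ s → t ∈ s → r ≠ t → f r = f t → (r = p ∧ t = q) ∨ (r = q ∧ t = p) := by
  rw [Set.InjOn] at hninj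
  push_neg at hninj
  obtain ⟨p, hp, q, hq, hfpq, hpq⟩ := hninj
  have herase : ∀ z w : V, z ∈ s → w ∈ s → z ≠ w → f z = f w →
      Set.InjOn f (s.erase w) := by
    intro z w hz hw hzw hfzw
    apply Finset.injOn_of_card_image_eq
    have him : (s.erase w).image f = s.image f := by
      apply Finset.Subset.antisymm
      · exact Finset.image_subset_image (Finset.erase_subset _ _)
      · intro o ho
        obtain ⟨x, hx, rfl⟩ := Finset.mem_image.mp ho
        by_cases hxw : x = w
        · exact Finset.mem_image.mpr ⟨z, Finset.mem_erase.mpr ⟨hzw, hz⟩, by rw [hfzw, hxw]⟩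
        · exact Finset.mem_image.mpr ⟨x, Finset.mem_erase.mpr ⟨hxw, hx⟩, rfl⟩
    rw [him]
    have h1 := Finset.card_erase_of_mem hw
    have h2 := Finset.card_image_le (s := s.erase w) (f := f)
    rw [him] at h2
    omega
  refine ⟨p, q, hp, hq, hpq, hfpq, ?_⟩
  intro r t hr ht hrt hfrt
  have hinq := herase p q hp hq hpq hfpq
  have hinp := herase q p hq hp hpq.symm hfpq.symm
  by_cases hrq : r = q
  · subst hrq
    -- r = q ; then t must be p
    by_cases htp : t = p
    · exact Or.inr ⟨rfl, htp⟩
    · exfalso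
      have hrmem : (r : V) ∈ s.erase p := Finset.mem_erase.mpr ⟨hpq.symm, hr⟩
      have htmem : t ∈ s.erase p := Finset.mem_erase.mpr ⟨htp, ht⟩
      exact hrt (hinp hrmem htmem hfrt)
  · by_cases htq : t = q
    · subst htq
      -- t = q, then r = p?
      by_cases hrp : r = p
      · exact Or.inl ⟨hrp, rfl⟩
      · exfalso
        have hrmem : r ∈ s.erase p := Finset.mem_erase.mpr ⟨hrp, hr⟩
        have htmem : t ∈ s.erase p := Finset.mem_erase.mpr ⟨hpq.symm, ht⟩
        exact hrt (hinp hrmem htmem hfrt)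
    · exfalso
      have hrmem : r ∈ s.erase q := Finset.mem_erase.mpr ⟨hrq, hr⟩
      have htmem : t ∈ s.erase q := Finset.mem_erase.mpr ⟨htq, ht⟩
      exact hrt (hinq hrmem htmem hfrt)

end counting

section classes

open Finset

variable [Fintype V] (G : SimpleGraph V) (c : V → Option (Fin 5)) (v : V)

noncomputable def Nf : Finset V := Finset.univ.filter (fun u => G.Adj v u ∧ (c u).isSome)

noncomputable def Bf (j : Fin 5) : Finset V :=
  Finset.univ.filter (fun u => G.Adj v u ∧ c u = some j)

noncomputable def pat : ℕ :=
  if ∃ j, 4 ≤ (Bf G c v j).card then 4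
  else if ∃ j j', j ≠ j' ∧ 2 ≤ (Bf G c v j).card ∧ 2 ≤ (Bf G c v j').card then 3
  else if ∃ j, 3 ≤ (Bf G c v j).card then 2
  else if ∃ j, 2 ≤ (Bf G c v j).card then 1
  else 0

variable {G c v}

lemma mem_Bf {u : V} {j : Fin 5} : u ∈ Bf G c v j ↔ G.Adj v u ∧ c u = some j := by
  simp [Bf]

lemma mem_Nf {u : V} : u ∈ Nf G c v ↔ G.Adj v u ∧ (c u).isSome := by
  simp [Nf]

lemma Nf_colour {u : V} (h : u ∈ Nf G c v) : ∃ m, u ∈ Bf G c v m := by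
  rw [mem_Nf] at h
  obtain ⟨m, hm⟩ := Option.isSome_iff_exists.mp h.2
  exact ⟨m, mem_Bf.mpr ⟨h.1, hm⟩⟩

lemma sum_Bf : ∑ j : Fin 5, (Bf G c v j).card = (Nf G c v).card := by
  rw [Finset.card_eq_sum_card_fiberwise
    (f := fun u => (c u).iget) (t := Finset.univ) (fun u _ => Finset.mem_univ _)]
  apply Finset.sum_congr rfl
  intro j _
  congr 1
  ext u
  simp only [mem_Bf, Nf, Finset.mem_filter, Finset.mem_univ, true_and]
  cases hcu : c u with
  | none => simp
  | some m => simp [Option.iget]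

lemma Bf_upd {u : V} {k : Fin 5} (hadj : G.Adj v u) (j : Fin 5) :
    Bf G (upd c u k) v j = if j = k then insert u (Bf G c v j) else (Bf G c v j).erase u := by
  ext y
  by_cases hyu : y = u
  · subst hyu
    by_cases hjk : j = k
    · simp [mem_Bf, hjk, upd_self, hadj]
    · simp [mem_Bf, hjk, upd_self, Ne.symm hjk, fun h => hjk (Option.some.inj h).symm]
  · by_cases hjk : j = k
    · subst hjk
      rw [if_pos rfl]
      simp only [Finset.mem_insert, mem_Bf, upd_ne hyu]
      tauto
    · simp only [if_neg hjk, Finset.mem_erase, mem_Bf, upd_ne hyu]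
      tauto

lemma Bf_upd_nonadj {p : V} {ℓ : Fin 5} (h : ¬ G.Adj v p) (j : Fin 5) :
    Bf G (upd c p ℓ) v j = Bf G c v j := by
  ext y
  by_cases hyp : y = p
  · subst hyp
    simp [mem_Bf, h]
  · simp [mem_Bf, upd_ne hyp]

lemma count_big {T : Finset V} {m : ℕ}
    (hT : ∀ ℓ : Fin 5, ∃ p, p ∈ T ∧ ∃ q, q ∈ T ∧ p ≠ q ∧ hasx G c p v ℓ ∧ hasx G c q v ℓ)
    (hm : ∀ y ∈ T, (CSf G c y v).card ≤ m) : 10 ≤ T.card * m := by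
  have h2 : ∀ ℓ : Fin 5, 2 ≤ (T.filter (fun y => hasx G c y v ℓ)).card := by
    intro ℓ
    obtain ⟨p, hp, q, hq, hpq, h1, h2⟩ := hT ℓ
    exact Finset.one_lt_card.mpr ⟨p, Finset.mem_filter.mpr ⟨hp, h1⟩,
      q, Finset.mem_filter.mpr ⟨hq, h2⟩, hpq⟩
  have hdc : ∑ ℓ : Fin 5, (T.filter (fun y => hasx G c y v ℓ)).card
      = ∑ y ∈ T, (CSf G c y v).card := by
    have lhs : ∀ ℓ : Fin 5, (T.filter (fun y => hasx G c y v ℓ)).card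
        = ∑ y ∈ T, if hasx G c y v ℓ then 1 else 0 := by
      intro ℓ; rw [Finset.sum_boole]; simp
    have rhs : ∀ y : V, (CSf G c y v).card
        = ∑ ℓ : Fin 5, if hasx G c y v ℓ then 1 else 0 := by
      intro y; rw [Finset.sum_boole]; simp [CSf]
    simp only [lhs, rhs]
    exact Finset.sum_comm
  calc (10 : ℕ) = ∑ _ℓ : Fin 5, 2 := by simp
    _ ≤ ∑ ℓ : Fin 5, (T.filter (fun y => hasx G c y v ℓ)).card :=
        Finset.sum_le_sum (fun ℓ _ => h2 ℓ)
    _ = ∑ y ∈ T, (CSf G c y v).card := hdc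
    _ ≤ ∑ _y ∈ T, m := Finset.sum_le_sum hm
    _ = T.card * m := by rw [Finset.sum_const, smul_eq_mul]

lemma exists_ne_ne (a b : Fin 5) : ∃ k : Fin 5, k ≠ a ∧ k ≠ b := by
  have : (Finset.univ \ {a, b} : Finset (Fin 5)).Nonempty := by
    rw [← Finset.card_pos]
    have h1 : ({a, b} : Finset (Fin 5)).card ≤ 2 := Finset.card_insert_le _ _ |>.trans (by simp)
    have h2 := Finset.card_sdiff_add_card_eq_card (Finset.subset_univ ({a, b} : Finset (Fin 5)))
    have h3 : (Finset.univ : Finset (Fin 5)).card = 5 := by simp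
    omega
  obtain ⟨k, hk⟩ := this
  rw [Finset.mem_sdiff, Finset.mem_insert, Finset.mem_singleton] at hk
  exact ⟨k, fun h => hk.2 (Or.inl h), fun h => hk.2 (Or.inr h)⟩

lemma mem_of_two {s : Finset V} {p q r : V} (hc : s.card ≤ 2) (hp : p ∈ s) (hq : q ∈ s)
    (hpq : p ≠ q) (hr : r ∈ s) : r = p ∨ r = q := by
  by_contra hcon
  push_neg at hcon
  have hsub : ({r, p, q} : Finset V) ⊆ s := by
    intro x hx
    simp only [Finset.mem_insert, Finset.mem_singleton] at hx
    rcases hx with rfl | rfl | rfl <;> assumption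
  have : ({r, p, q} : Finset V).card = 3 := by
    rw [Finset.card_insert_of_notMem (by simp [hcon.1, hcon.2]),
      Finset.card_insert_of_notMem (by simp [hpq]), Finset.card_singleton]
  have := Finset.card_le_card hsub
  omega

end classes

section main

open Finset

variable [Fintype V] {G : SimpleGraph V} {c : V → Option (Fin 5)} {v : V}

lemma free_of_injOn' (hv : c v = none) {u : V} (hinj : Set.InjOn c (CNf G c u v)) :
    Free G c u := by
  intro p q hp hq hps hpq
  have hqs : (c q).isSome := by rw [← hpq]; exact hps
  have hpv : p ≠ v := fun h => by rw [h, hv] at hps; simp at hps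
  have hqv : q ≠ v := fun h => by rw [h, hv] at hqs; simp at hqs
  exact hinj (by simp [CNf, hp, hpv, hps]) (by simp [CNf, hq, hqv, hqs]) hpq

lemma pat_le_two {c' : V → Option (Fin 5)} (h1 : ∀ j, (Bf G c' v j).card ≤ 3)
    (h2 : ∀ j j', j ≠ j' → 2 ≤ (Bf G c' v j).card → 2 ≤ (Bf G c' v j').card → False) :
    pat G c' v ≤ 2 := by
  unfold pat
  rw [if_neg, if_neg]
  · split_ifs <;> omega
  · rintro ⟨j, j', hne, hj, hj'⟩
    exact h2 j j' hne hj hj'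
  · rintro ⟨j, hj⟩
    exact absurd (h1 j) (by omega)

lemma pat_le_one {c' : V → Option (Fin 5)} (h1 : ∀ j, (Bf G c' v j).card ≤ 2)
    (h2 : ∀ j j', j ≠ j' → 2 ≤ (Bf G c' v j).card → 2 ≤ (Bf G c' v j').card → False) :
    pat G c' v ≤ 1 := by
  unfold pat
  rw [if_neg, if_neg, if_neg]
  · split_ifs <;> omega
  · rintro ⟨j, hj⟩
    exact absurd (h1 j) (by omega)
  · rintro ⟨j, j', hne, hj, hj'⟩
    exact h2 j j' hne hj hj'
  · rintro ⟨j, hj⟩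
    exact absurd (h1 j) (by omega)

/-- assemble a single recolouring step -/
lemma assemble (hc : pGood G c) (hv : c v = none) {u : V} {k : Fin 5} (hsome : (c u).isSome)
    (hg : Good G c u k) :
    pGood G (upd c u k) ∧ (upd c u k) v = none ∧
      (∀ x, ((upd c u k) x).isSome ↔ (c x).isSome) := by
  have huv : v ≠ u := by
    intro h
    rw [h] at hv
    rw [hv] at hsome
    simp at hsome
  refine ⟨surgery hc hg, by rw [upd_ne huv]; exact hv, ?_⟩
  intro x
  by_cases hx : x = u
  · subst hx
    simp [upd_self, hsome]
  · rw [upd_ne hx]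

lemma quad_finish {c' : V → Option (Fin 5)} {a k : Fin 5} {w : V}
    (hBa : ∀ j, (Bf G c' v j).card = (if j = a then 4 else 0))
    (hka : k ≠ a) (hw : w ∈ Bf G c' v a) :
    pat G (upd c' w k) v ≤ 2 := by
  have hadj : G.Adj v w := (mem_Bf.mp hw).1
  have hcards : ∀ j, (Bf G (upd c' w k) v j).card ≤ 3 ∧
      (j ≠ a → (Bf G (upd c' w k) v j).card ≤ 1) := by
    intro j
    rw [Bf_upd hadj j]
    split_ifs with hjk
    · subst hjk
      have h1 := Finset.card_insert_le w (Bf G c' v j)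
      have h2 := hBa j
      rw [if_neg hka] at h2
      exact ⟨by omega, fun _ => by omega⟩
    · by_cases hja : j = a
      · subst hja
        rw [Finset.card_erase_of_mem hw, hBa j, if_pos rfl]
        exact ⟨by omega, fun h => absurd rfl h⟩
      · have h2 := hBa j
        rw [if_neg hja] at h2
        have h3 := Finset.card_erase_le (s := Bf G c' v j) (a := w)
        exact ⟨by omega, fun _ => by omega⟩
  apply pat_le_two
  · intro j; exact (hcards j).1
  · intro j j' hne hj hj'
    by_cases hja : j = a
    · subst hja
      have := (hcards j').2 (Ne.symm hne)
      omega
    · have := (hcards j).2 hja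
      omega

lemma double_finish {c' : V → Option (Fin 5)} {a b k : Fin 5} {w : V} (hab : a ≠ b)
    (hc2 : ∀ j, (Bf G c' v j).card = (if j = a then 2 else if j = b then 2 else 0))
    (hka : k ≠ a) (hw : w ∈ Bf G c' v a) :
    pat G (upd c' w k) v ≤ 2 := by
  have hadj : G.Adj v w := (mem_Bf.mp hw).1
  have hcards : ∀ j, (Bf G (upd c' w k) v j).card ≤ 3 ∧
      (j ≠ b → (Bf G (upd c' w k) v j).card ≤ 1) := by
    intro j
    rw [Bf_upd hadj j]
    split_ifs with hjk
    · subst hjk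
      have h1 := Finset.card_insert_le w (Bf G c' v j)
      have h2 := hc2 j
      rw [if_neg hka] at h2
      by_cases hjb : j = b
      · rw [if_pos hjb] at h2
        exact ⟨by omega, fun h => absurd hjb h⟩
      · rw [if_neg hjb] at h2
        exact ⟨by omega, fun _ => by omega⟩
    · by_cases hja : j = a
      · subst hja
        rw [Finset.card_erase_of_mem hw, hc2 j, if_pos rfl]
        exact ⟨by omega, fun _ => by omega⟩
      · have h2 := hc2 j
        rw [if_neg hja] at h2
        have h3 := Finset.card_erase_le (s := Bf G c' v j) (a := w)
        by_cases hjb : j = b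
        · rw [if_pos hjb] at h2
          exact ⟨by omega, fun h => absurd hjb h⟩
        · rw [if_neg hjb] at h2
          exact ⟨by omega, fun _ => by omega⟩
  apply pat_le_two
  · intro j; exact (hcards j).1
  · intro j j' hne hj hj'
    by_cases hjb : j = b
    · subst hjb
      have := (hcards j').2 (Ne.symm hne)
      omega
    · have := (hcards j).2 hjb
      omega

lemma double_core (hΔ : ∀ w : V, (G.neighborSet w).ncard ≤ 5) (hc : pGood G c)
    (hv : c v = none) {a b : Fin 5} (hab : a ≠ b)
    (hcform : ∀ j, (Bf G c v j).card = (if j = a then 2 else if j = b then 2 else 0))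
    (hIn : ∀ u k, u ∈ Nf G c v → k ≠ a → k ≠ b → ¬ Good G c u k)
    {u : V} (hu : u ∈ Bf G c v a)
    (hbad : ∀ k, k ≠ a → ¬ Good G c u k)
    (hsd : (CNf G c u v).card ≤ ((CNf G c u v).image c).card + 1) :
    ∃ c₁, pGood G c₁ ∧ c₁ v = none ∧ (∀ x, (c₁ x).isSome ↔ (c x).isSome) ∧
      pat G c₁ v ≤ 2 := by
  have hadjvu : G.Adj v u := (mem_Bf.mp hu).1
  have hcu : c u = some a := (mem_Bf.mp hu).2
  have hus : (c u).isSome := by rw [hcu]; rfl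
  have hninj : ¬ Set.InjOn c (CNf G c u v) := by
    intro hinj
    obtain ⟨k, hka, _⟩ := exists_ne_ne a a
    exact hbad k hka (good_of_free (free_of_injOn' hv hinj) k)
  obtain ⟨p, q, hpmem, hqmem, hpq, hcpq, huniq⟩ :=
    unique_dup (s := CNf G c u v) (f := c) hsd hninj
  have hwitsp : ∀ k, k ≠ a → hasx G c p u k := by
    intro k hk
    obtain ⟨j', p', q', ha1, ha2, hne, hc1', hc2', hh1, hh2⟩ := bad_pair (hbad k hk)
    have hp'v : p' ≠ v := by intro h; rw [h, hv] at hc1'; cases hc1'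
    have hq'v : q' ≠ v := by intro h; rw [h, hv] at hc2'; cases hc2'
    have hp'm : p' ∈ CNf G c u v := mem_CNf.mpr ⟨ha1, hp'v, by rw [hc1']; rfl⟩
    have hq'm : q' ∈ CNf G c u v := mem_CNf.mpr ⟨ha2, hq'v, by rw [hc2']; rfl⟩
    rcases huniq p' q' hp'm hq'm hne (hc1'.trans hc2'.symm) with ⟨rfl, rfl⟩ | ⟨rfl, rfl⟩
    · exact hh1
    · exact hh2
  have hadjup : G.Adj u p := (mem_CNf.mp hpmem).1
  have hps : (c p).isSome := (mem_CNf.mp hpmem).2.2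
  have hfreep : Free G c p := free_of_wits hΔ hadjup.symm hcu hwitsp
  by_cases hpadj : G.Adj v p
  · -- p is a coloured neighbour of v and is free : contradiction with hIn
    exfalso
    obtain ⟨ℓ, hla, hlb⟩ := exists_ne_ne a b
    exact hIn p ℓ (mem_Nf.mpr ⟨hpadj, hps⟩) hla hlb (good_of_free hfreep ℓ)
  · -- two recolourings
    obtain ⟨ℓ'', hℓ''⟩ : ∃ ℓ'', some ℓ'' ∉ ((CNf G c u v).erase p).image c := by
      by_contra hcon
      push_neg at hcon
      have hsub : Finset.univ.image (some : Fin 5 → Option (Fin 5)) ⊆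
          ((CNf G c u v).erase p).image c := by
        intro o ho
        obtain ⟨kk, _, rfl⟩ := Finset.mem_image.mp ho
        exact hcon kk
      have h5 : (Finset.univ.image (some : Fin 5 → Option (Fin 5))).card = 5 := by
        rw [Finset.card_image_of_injective _ (Option.some_injective _)]
        simp
      have hle := Finset.card_le_card hsub
      have hcee := Finset.card_image_le (s := (CNf G c u v).erase p) (f := c)
      have hcer := Finset.card_erase_of_mem hpmem
      have hcnf4 : (CNf G c u v).card ≤ 4 := cnf_le4 (c := c) hΔ hadjvu.symm
      omega
    obtain ⟨hpg1, hnone1, hsupp1⟩ := assemble hc hv hps (good_of_free hfreep ℓ'')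
    have hBf1 : ∀ j, Bf G (upd c p ℓ'') v j = Bf G c v j := Bf_upd_nonadj hpadj
    have hup : u ≠ p := hadjup.ne
    have hc1u : upd c p ℓ'' u = some a := by rw [upd_ne hup]; exact hcu
    have hcnfeq : CNf G (upd c p ℓ'') u v = CNf G c u v := by
      ext z
      rw [mem_CNf, mem_CNf]
      by_cases hzp : z = p
      · subst hzp
        simp [upd_self, hps]
      · rw [upd_ne hzp]
    have hinj1 : Set.InjOn (upd c p ℓ'') (CNf G (upd c p ℓ'') u v) := by
      rw [hcnfeq]
      intro r hr s hs heq
      by_cases hrp : r = p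
      · by_cases hsp : s = p
        · rw [hrp, hsp]
        · exfalso
          rw [hrp, upd_self, upd_ne hsp] at heq
          exact hℓ'' (Finset.mem_image.mpr ⟨s, Finset.mem_erase.mpr ⟨hsp, hs⟩, heq.symm⟩)
      · by_cases hsp : s = p
        · exfalso
          rw [hsp, upd_self, upd_ne hrp] at heq
          exact hℓ'' (Finset.mem_image.mpr ⟨r, Finset.mem_erase.mpr ⟨hrp, hr⟩, heq⟩)
        · rw [upd_ne hrp, upd_ne hsp] at heq
          by_cases hrs : r = s
          · exact hrs
          · exfalso
            rcases huniq r s hr hs hrs heq with ⟨rfl, rfl⟩ | ⟨rfl, rfl⟩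
            · exact hrp rfl
            · exact hsp rfl
    have hfree1 : Free G (upd c p ℓ'') u := free_of_injOn' hnone1 hinj1
    obtain ⟨k, hka, hkb⟩ := exists_ne_ne a b
    have hus1 : ((upd c p ℓ'') u).isSome := by rw [hc1u]; rfl
    obtain ⟨hpg2, hnone2, hsupp2⟩ :=
      assemble (c := upd c p ℓ'') hpg1 hnone1 hus1 (good_of_free hfree1 k)
    refine ⟨upd (upd c p ℓ'') u k, hpg2, hnone2,
      fun x => (hsupp2 x).trans (hsupp1 x), ?_⟩
    have hcform1 : ∀ j, (Bf G (upd c p ℓ'') v j).card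
        = (if j = a then 2 else if j = b then 2 else 0) := by
      intro j
      rw [hBf1 j]
      exact hcform j
    have huB1 : u ∈ Bf G (upd c p ℓ'') v a := mem_Bf.mpr ⟨hadjvu, hc1u⟩
    exact double_finish hab hcform1 hka huB1

lemma step (hΔ : ∀ w : V, (G.neighborSet w).ncard ≤ 5) (hc : pGood G c) (hv : c v = none)
    (hn4 : (Nf G c v).card ≤ 4) (hng : ∀ ℓ : Fin 5, ¬ Good G c v ℓ) :
    ∃ c₁, pGood G c₁ ∧ c₁ v = none ∧ (∀ x, ((c₁) x).isSome ↔ (c x).isSome) ∧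
      pat G c₁ v < pat G c v := by
  have hblock : ∀ ℓ : Fin 5, ∃ j p q, p ∈ Bf G c v j ∧ q ∈ Bf G c v j ∧ p ≠ q ∧
      hasx G c p v ℓ ∧ hasx G c q v ℓ := by
    intro ℓ
    obtain ⟨j, p, q, h1, h2, h3, h4, h5, h6, h7⟩ := bad_pair (hng ℓ)
    exact ⟨j, p, q, mem_Bf.mpr ⟨h1, h4⟩, mem_Bf.mpr ⟨h2, h5⟩, h3, h6, h7⟩
  have hsum : ∑ j : Fin 5, (Bf G c v j).card ≤ 4 := by rw [sum_Bf]; exact hn4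
  by_cases h4 : ∃ j, 4 ≤ (Bf G c v j).card
  · -- QUAD case
    obtain ⟨a, ha4⟩ := h4
    have hZ : ∑ j ∈ Finset.univ.erase a, (Bf G c v j).card + (Bf G c v a).card
        = ∑ j : Fin 5, (Bf G c v j).card := Finset.sum_erase_add _ _ (Finset.mem_univ a)
    have ha4' : (Bf G c v a).card = 4 := by omega
    have hrest0 : ∀ j, j ≠ a → (Bf G c v j).card = 0 := by
      intro j hj
      have hzero : ∑ j ∈ Finset.univ.erase a, (Bf G c v j).card = 0 := by omega
      exact (Finset.sum_eq_zero_iff.mp hzero) j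
        (Finset.mem_erase.mpr ⟨hj, Finset.mem_univ _⟩)
    have hcards : ∀ j, (Bf G c v j).card = (if j = a then 4 else 0) := by
      intro j
      split_ifs with hja
      · subst hja; exact ha4'
      · exact hrest0 j hja
    have hpatc : pat G c v = 4 := by
      unfold pat
      rw [if_pos ⟨a, ha4⟩]
    have hT : ∀ ℓ : Fin 5, ∃ p, p ∈ Bf G c v a ∧ ∃ q, q ∈ Bf G c v a ∧ p ≠ q ∧
        hasx G c p v ℓ ∧ hasx G c q v ℓ := by
      intro ℓ
      obtain ⟨j, p, q, hp, hq, hpq, hh1, hh2⟩ := hblock ℓ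
      have hja : j = a := by
        by_contra hja
        have := hrest0 j hja
        have := Finset.one_lt_card.mpr ⟨p, hp, q, hq, hpq⟩
        omega
      subst hja
      exact ⟨p, hp, q, hq, hpq, hh1, hh2⟩
    have hbig : ∃ y ∈ Bf G c v a, 3 ≤ (CSf G c y v).card := by
      by_contra hcon
      push_neg at hcon
      have := count_big (m := 2) hT (fun y hy => by
        have := hcon y hy; omega)
      rw [ha4'] at this
      omega
    obtain ⟨y, hy, hcs3⟩ := hbig
    have hadjvy : G.Adj v y := (mem_Bf.mp hy).1
    have hcy : c y = some a := (mem_Bf.mp hy).2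
    have hys : (c y).isSome := by rw [hcy]; rfl
    have hcnf4 : (CNf G c y v).card ≤ 4 := cnf_le4 (c := c) hΔ hadjvy.symm
    have himg3 : 3 ≤ ((CNf G c y v).image c).card := by
      have h1 : (CSf G c y v).card ≤ ((CNf G c y v).image c).card := csf_le_image
      omega
    by_cases hfr : Set.InjOn c (CNf G c y v)
    · -- y is free; recolour it
      obtain ⟨k, hka, _⟩ := exists_ne_ne a a
      have hfree : Free G c y := free_of_injOn' hv hfr
      obtain ⟨hpg, hnone, hsupp⟩ := assemble hc hv hys (good_of_free hfree k)
      exact ⟨upd c y k, hpg, hnone, hsupp, by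
        have := quad_finish hcards hka hy
        omega⟩
    · -- y has a unique duplicated pair (p, q)
      have himlt : ((CNf G c y v).image c).card ≠ (CNf G c y v).card := by
        intro h
        exact hfr (Finset.injOn_of_card_image_eq h)
      have himle := Finset.card_image_le (s := CNf G c y v) (f := c)
      obtain ⟨p, q, hpmem, hqmem, hpq, hcpq, huniq⟩ :=
        unique_dup (s := CNf G c y v) (f := c) (by omega) hfr
      by_cases hex : ∃ k, k ≠ a ∧ Good G c y k
      · obtain ⟨k, hka, hgd⟩ := hex
        obtain ⟨hpg, hnone, hsupp⟩ := assemble hc hv hys hgd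
        exact ⟨upd c y k, hpg, hnone, hsupp, by
          have := quad_finish hcards hka hy
          omega⟩
      · push_neg at hex
        have hwitsp : ∀ k, k ≠ a → hasx G c p y k := by
          intro k hk
          obtain ⟨j', p', q', ha1, ha2, hne, hc1', hc2', hh1, hh2⟩ := bad_pair (hex k hk)
          have hp'v : p' ≠ v := by intro h; rw [h, hv] at hc1'; cases hc1'
          have hq'v : q' ≠ v := by intro h; rw [h, hv] at hc2'; cases hc2'
          have hp'm : p' ∈ CNf G c y v := mem_CNf.mpr ⟨ha1, hp'v, by rw [hc1']; rfl⟩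
          have hq'm : q' ∈ CNf G c y v := mem_CNf.mpr ⟨ha2, hq'v, by rw [hc2']; rfl⟩
          rcases huniq p' q' hp'm hq'm hne (hc1'.trans hc2'.symm) with ⟨rfl, rfl⟩ | ⟨rfl, rfl⟩
          · exact hh1
          · exact hh2
        have hadjyp : G.Adj y p := (mem_CNf.mp hpmem).1
        have hps : (c p).isSome := (mem_CNf.mp hpmem).2.2
        have hfreep : Free G c p := free_of_wits hΔ hadjyp.symm hcy hwitsp
        by_cases hpadj : G.Adj v p
        · -- p is itself a neighbour of v, hence coloured a : single recolouring of p
          have hpBa : p ∈ Bf G c v a := by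
            obtain ⟨m, hm⟩ := Nf_colour (mem_Nf.mpr ⟨hpadj, hps⟩)
            have : m = a := by
              by_contra hma
              have h0 := hrest0 m hma
              have : 0 < (Bf G c v m).card := Finset.card_pos.mpr ⟨p, hm⟩
              omega
            rwa [this] at hm
          obtain ⟨ℓ'', hla, _⟩ := exists_ne_ne a a
          obtain ⟨hpg, hnone, hsupp⟩ := assemble hc hv hps (good_of_free hfreep ℓ'')
          exact ⟨upd c p ℓ'', hpg, hnone, hsupp, by
            have := quad_finish hcards hla hpBa
            omega⟩
        · -- two recolourings : first p (invisible to v), then y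
          obtain ⟨ℓ'', hℓ''⟩ : ∃ ℓ'', some ℓ'' ∉ ((CNf G c y v).erase p).image c := by
            by_contra hcon
            push_neg at hcon
            have hsub : Finset.univ.image (some : Fin 5 → Option (Fin 5)) ⊆
                ((CNf G c y v).erase p).image c := by
              intro o ho
              obtain ⟨kk, _, rfl⟩ := Finset.mem_image.mp ho
              exact hcon kk
            have h5 : (Finset.univ.image (some : Fin 5 → Option (Fin 5))).card = 5 := by
              rw [Finset.card_image_of_injective _ (Option.some_injective _)]
              simp
            have hle := Finset.card_le_card hsub
            have hcee := Finset.card_image_le (s := (CNf G c y v).erase p) (f := c)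
            have hcer := Finset.card_erase_of_mem hpmem
            omega
          obtain ⟨hpg1, hnone1, hsupp1⟩ := assemble hc hv hps (good_of_free hfreep ℓ'')
          have hBf1 : ∀ j, Bf G (upd c p ℓ'') v j = Bf G c v j := Bf_upd_nonadj hpadj
          have hyp : y ≠ p := hadjyp.ne
          have hc1y : upd c p ℓ'' y = some a := by rw [upd_ne hyp]; exact hcy
          have hcnfeq : CNf G (upd c p ℓ'') y v = CNf G c y v := by
            ext z
            rw [mem_CNf, mem_CNf]
            by_cases hzp : z = p
            · subst hzp
              simp [upd_self, hps]
            · rw [upd_ne hzp]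
          have hinj1 : Set.InjOn (upd c p ℓ'') (CNf G (upd c p ℓ'') y v) := by
            rw [hcnfeq]
            intro r hr s hs heq
            by_cases hrp : r = p
            · by_cases hsp : s = p
              · rw [hrp, hsp]
              · exfalso
                rw [hrp, upd_self, upd_ne hsp] at heq
                exact hℓ'' (Finset.mem_image.mpr ⟨s,
                  Finset.mem_erase.mpr ⟨hsp, hs⟩, heq.symm⟩)
            · by_cases hsp : s = p
              · exfalso
                rw [hsp, upd_self, upd_ne hrp] at heq
                exact hℓ'' (Finset.mem_image.mpr ⟨r,
                  Finset.mem_erase.mpr ⟨hrp, hr⟩, heq⟩)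
              · rw [upd_ne hrp, upd_ne hsp] at heq
                by_cases hrs : r = s
                · exact hrs
                · exfalso
                  rcases huniq r s hr hs hrs heq with ⟨rfl, rfl⟩ | ⟨rfl, rfl⟩
                  · exact hrp rfl
                  · exact hsp rfl
          have hfree1 : Free G (upd c p ℓ'') y := free_of_injOn' hnone1 hinj1
          obtain ⟨k, hka, _⟩ := exists_ne_ne a a
          have hys1 : ((upd c p ℓ'') y).isSome := by rw [hc1y]; rfl
          obtain ⟨hpg2, hnone2, hsupp2⟩ :=
            assemble (c := upd c p ℓ'') hpg1 hnone1 hys1 (good_of_free hfree1 k)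
          refine ⟨upd (upd c p ℓ'') y k, hpg2, hnone2,
            fun x => (hsupp2 x).trans (hsupp1 x), ?_⟩
          have hcards1 : ∀ j, (Bf G (upd c p ℓ'') v j).card = (if j = a then 4 else 0) := by
            intro j
            rw [hBf1 j]
            exact hcards j
          have hyB1 : y ∈ Bf G (upd c p ℓ'') v a := mem_Bf.mpr ⟨hadjvy, hc1y⟩
          have := quad_finish hcards1 hka hyB1
          omega
  · by_cases h22 : ∃ j j', j ≠ j' ∧ 2 ≤ (Bf G c v j).card ∧ 2 ≤ (Bf G c v j').card
    · -- DOUBLE case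
      obtain ⟨a, b, hab, ha2, hb2⟩ := h22
      have hba : b ≠ a := hab.symm
      have hZa : ∑ j ∈ Finset.univ.erase a, (Bf G c v j).card + (Bf G c v a).card
          = ∑ j : Fin 5, (Bf G c v j).card := Finset.sum_erase_add _ _ (Finset.mem_univ a)
      have hbmem : b ∈ Finset.univ.erase a := Finset.mem_erase.mpr ⟨hba, Finset.mem_univ _⟩
      have hZb : ∑ j ∈ (Finset.univ.erase a).erase b, (Bf G c v j).card + (Bf G c v b).card
          = ∑ j ∈ Finset.univ.erase a, (Bf G c v j).card := Finset.sum_erase_add _ _ hbmem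
      have ha2' : (Bf G c v a).card = 2 := by omega
      have hb2' : (Bf G c v b).card = 2 := by omega
      have hrest0 : ∀ j, j ≠ a → j ≠ b → (Bf G c v j).card = 0 := by
        intro j hja hjb
        have hzero : ∑ j ∈ (Finset.univ.erase a).erase b, (Bf G c v j).card = 0 := by omega
        exact (Finset.sum_eq_zero_iff.mp hzero) j
          (Finset.mem_erase.mpr ⟨hjb, Finset.mem_erase.mpr ⟨hja, Finset.mem_univ _⟩⟩)
      have hcform : ∀ j, (Bf G c v j).card = (if j = a then 2 else if j = b then 2 else 0) := by
        intro j
        split_ifs with h1 h2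
        · subst h1; exact ha2'
        · subst h2; exact hb2'
        · exact hrest0 j h1 h2
      have hcform' : ∀ j, (Bf G c v j).card = (if j = b then 2 else if j = a then 2 else 0) := by
        intro j
        rw [hcform j]
        by_cases h1 : j = a <;> by_cases h2 : j = b <;> simp [h1, h2]
      have hpatc : pat G c v = 3 := by
        unfold pat
        rw [if_neg h4, if_pos ⟨a, b, hab, ha2, hb2⟩]
      have hNfcol : ∀ u, u ∈ Nf G c v → u ∈ Bf G c v a ∨ u ∈ Bf G c v b := by
        intro u hu
        obtain ⟨m, hm⟩ := Nf_colour hu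
        by_cases hma : m = a
        · exact Or.inl (hma ▸ hm)
        · by_cases hmb : m = b
          · exact Or.inr (hmb ▸ hm)
          · exfalso
            have h0 := hrest0 m hma hmb
            have : 0 < (Bf G c v m).card := Finset.card_pos.mpr ⟨u, hm⟩
            omega
      by_cases hI : ∃ u k, u ∈ Nf G c v ∧ k ≠ a ∧ k ≠ b ∧ Good G c u k
      · obtain ⟨u, k, hu, hka, hkb, hgd⟩ := hI
        have hus : (c u).isSome := (mem_Nf.mp hu).2
        obtain ⟨hpg, hnone, hsupp⟩ := assemble hc hv hus hgd
        refine ⟨upd c u k, hpg, hnone, hsupp, ?_⟩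
        rcases hNfcol u hu with hm | hm
        · have := double_finish hab hcform hka hm
          omega
        · have := double_finish hba hcform' hkb hm
          omega
      · by_cases hII : ∃ u, u ∈ Nf G c v ∧
            ((c u = some a ∧ Good G c u b) ∨ (c u = some b ∧ Good G c u a))
        · obtain ⟨u, hu, hdisj⟩ := hII
          have hadjvu : G.Adj v u := (mem_Nf.mp hu).1
          have hus : (c u).isSome := (mem_Nf.mp hu).2
          rcases hdisj with ⟨hcu, hgd⟩ | ⟨hcu, hgd⟩
          · obtain ⟨hpg, hnone, hsupp⟩ := assemble hc hv hus hgd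
            refine ⟨upd c u b, hpg, hnone, hsupp, ?_⟩
            have := double_finish hab hcform hba (mem_Bf.mpr ⟨hadjvu, hcu⟩)
            omega
          · obtain ⟨hpg, hnone, hsupp⟩ := assemble hc hv hus hgd
            refine ⟨upd c u a, hpg, hnone, hsupp, ?_⟩
            have := double_finish hba hcform' hab (mem_Bf.mpr ⟨hadjvu, hcu⟩)
            omega
        · -- neither simple move available
          push_neg at hI hII
          have hbadall : ∀ u m, u ∈ Bf G c v m → (m = a ∨ m = b) →
              ∀ k, k ≠ m → ¬ Good G c u k := by
            intro u m hum hmab k hkm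
            have huN : u ∈ Nf G c v := by
              rw [mem_Nf]
              exact ⟨(mem_Bf.mp hum).1, by rw [(mem_Bf.mp hum).2]; rfl⟩
            have hcu : c u = some m := (mem_Bf.mp hum).2
            rcases hmab with rfl | rfl
            · by_cases hkb : k = b
              · subst hkb
                intro hgd
                rcases hII u huN with ⟨hna, _⟩
                exact (hna hcu) hgd
              · exact hI u k huN hkm hkb
            · by_cases hka : k = a
              · subst hka
                intro hgd
                rcases hII u huN with ⟨_, hnb⟩
                exact (hnb hcu) hgd
              · exact hI u k huN hka hkm
          by_cases hSD : ∃ u ∈ Nf G c v,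
              (CNf G c u v).card ≤ ((CNf G c u v).image c).card + 1
          · obtain ⟨u, hu, hsd⟩ := hSD
            rcases hNfcol u hu with hm | hm
            · obtain ⟨c₁, hpg, hnone, hsupp, hple⟩ :=
                double_core hΔ hc hv hab hcform
                  (fun u k hu hka hkb => hI u k hu hka hkb) hm
                  (fun k hk => hbadall u a hm (Or.inl rfl) k hk) hsd
              exact ⟨c₁, hpg, hnone, hsupp, by omega⟩
            · obtain ⟨c₁, hpg, hnone, hsupp, hple⟩ :=
                double_core hΔ hc hv hba hcform'
                  (fun u k hu hkb hka => hI u k hu hka hkb) hm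
                  (fun k hk => hbadall u b hm (Or.inr rfl) k hk) hsd
              exact ⟨c₁, hpg, hnone, hsupp, by omega⟩
          · -- all neighbours have at least two repeated colours : counting contradiction
            exfalso
            push_neg at hSD
            have hCS2 : ∀ u, u ∈ Nf G c v → (CSf G c u v).card ≤ 2 := by
              intro u hu
              have h1 : (CSf G c u v).card ≤ ((CNf G c u v).image c).card := csf_le_image
              have h2 := hSD u hu
              have h3 : (CNf G c u v).card ≤ 4 :=
                cnf_le4 (c := c) hΔ ((mem_Nf.mp hu).1.symm)
              omega
            obtain ⟨x1, x2, hx12, hBa⟩ := Finset.card_eq_two.mp ha2'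
            obtain ⟨z1, z2, hz12, hBb⟩ := Finset.card_eq_two.mp hb2'
            have hx1m : x1 ∈ Bf G c v a := by rw [hBa]; simp
            have hz1m : z1 ∈ Bf G c v b := by rw [hBb]; simp
            have hx1N : x1 ∈ Nf G c v := by
              rw [mem_Nf]
              exact ⟨(mem_Bf.mp hx1m).1, by rw [(mem_Bf.mp hx1m).2]; rfl⟩
            have hz1N : z1 ∈ Nf G c v := by
              rw [mem_Nf]
              exact ⟨(mem_Bf.mp hz1m).1, by rw [(mem_Bf.mp hz1m).2]; rfl⟩
            have hcover : (Finset.univ : Finset (Fin 5)) ⊆ CSf G c x1 v ∪ CSf G c z1 v := by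
              intro ℓ _
              obtain ⟨j, p, q, hp, hq, hpq, hh1, hh2⟩ := hblock ℓ
              have hjab : j = a ∨ j = b := by
                by_contra hcon
                push_neg at hcon
                have h0 := hrest0 j hcon.1 hcon.2
                have : 0 < (Bf G c v j).card := Finset.card_pos.mpr ⟨p, hp⟩
                omega
              rcases hjab with rfl | rfl
              · rw [hBa] at hp hq
                simp only [Finset.mem_insert, Finset.mem_singleton] at hp hq
                apply Finset.mem_union_left
                simp only [CSf, Finset.mem_filter, Finset.mem_univ, true_and]
                rcases hp with rfl | rfl
                · exact hh1
                · rcases hq with rfl | rfl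
                  · exact hh2
                  · exact absurd rfl hpq
              · rw [hBb] at hp hq
                simp only [Finset.mem_insert, Finset.mem_singleton] at hp hq
                apply Finset.mem_union_right
                simp only [CSf, Finset.mem_filter, Finset.mem_univ, true_and]
                rcases hp with rfl | rfl
                · exact hh1
                · rcases hq with rfl | rfl
                  · exact hh2
                  · exact absurd rfl hpq
            have h5 : (5 : ℕ) ≤ (CSf G c x1 v ∪ CSf G c z1 v).card := by
              calc (5 : ℕ) = (Finset.univ : Finset (Fin 5)).card := by simp
                _ ≤ _ := Finset.card_le_card hcover
            have := Finset.card_union_le (CSf G c x1 v) (CSf G c z1 v)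
            have := hCS2 x1 hx1N
            have := hCS2 z1 hz1N
            omega
    · by_cases h3 : ∃ j, 3 ≤ (Bf G c v j).card
      · -- TRIPLE case
        obtain ⟨a, ha3⟩ := h3
        have ha3' : (Bf G c v a).card = 3 := by
          have : ¬ 4 ≤ (Bf G c v a).card := fun h => h4 ⟨a, h⟩
          omega
        have ha2 : 2 ≤ (Bf G c v a).card := by omega
        have hrest : ∀ j, j ≠ a → (Bf G c v j).card ≤ 1 := by
          intro j hj
          by_contra hcon
          exact h22 ⟨j, a, hj, by omega, ha2⟩
        have hT : ∀ ℓ : Fin 5, ∃ p, p ∈ Bf G c v a ∧ ∃ q, q ∈ Bf G c v a ∧ p ≠ q ∧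
            hasx G c p v ℓ ∧ hasx G c q v ℓ := by
          intro ℓ
          obtain ⟨j, p, q, hp, hq, hpq, hh1, hh2⟩ := hblock ℓ
          have hja : j = a := by
            by_contra hja
            have := hrest j hja
            have := Finset.one_lt_card.mpr ⟨p, hp, q, hq, hpq⟩
            omega
          subst hja
          exact ⟨p, hp, q, hq, hpq, hh1, hh2⟩
        have hbig : ∃ y ∈ Bf G c v a, 4 ≤ (CSf G c y v).card := by
          by_contra hcon
          push_neg at hcon
          have := count_big (m := 3) hT (fun y hy => by
            have := hcon y hy; omega)
          rw [ha3'] at this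
          omega
        obtain ⟨y, hy, hcs4⟩ := hbig
        have hadjvy : G.Adj v y := (mem_Bf.mp hy).1
        have hcy : c y = some a := (mem_Bf.mp hy).2
        have hinj : Set.InjOn c (CNf G c y v) := by
          apply Finset.injOn_of_card_image_eq
          have h1 : (CSf G c y v).card ≤ ((CNf G c y v).image c).card := csf_le_image
          have h2 := Finset.card_image_le (s := CNf G c y v) (f := c)
          have h3 := cnf_le4 (c := c) hΔ hadjvy.symm
          omega
        have hfree : Free G c y := free_of_injOn' hv hinj
        obtain ⟨k, hka, hk0⟩ : ∃ k, k ≠ a ∧ (Bf G c v k).card = 0 := by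
          by_contra hcon
          push_neg at hcon
          have hge : 4 ≤ ∑ j ∈ Finset.univ.erase a, (Bf G c v j).card := by
            calc (4 : ℕ) = (Finset.univ.erase a).card := by
                  rw [Finset.card_erase_of_mem (Finset.mem_univ a)]
                  simp
              _ = ∑ _j ∈ Finset.univ.erase a, 1 := by rw [Finset.sum_const, smul_eq_mul, mul_one]
              _ ≤ ∑ j ∈ Finset.univ.erase a, (Bf G c v j).card := by
                  apply Finset.sum_le_sum
                  intro j hj
                  have := hcon j (Finset.mem_erase.mp hj).1
                  omega
          have hle : ∑ j ∈ Finset.univ.erase a, (Bf G c v j).card + (Bf G c v a).card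
              = ∑ j : Fin 5, (Bf G c v j).card :=
            Finset.sum_erase_add _ _ (Finset.mem_univ a)
          omega
        have hsome : (c y).isSome := by rw [hcy]; rfl
        obtain ⟨hpg, hnone, hsupp⟩ := assemble hc hv hsome (good_of_free hfree k)
        refine ⟨upd c y k, hpg, hnone, hsupp, ?_⟩
        have hpatc : pat G c v = 2 := by
          unfold pat
          rw [if_neg h4, if_neg h22, if_pos ⟨a, ha3⟩]
        have hcard' : ∀ j, (Bf G (upd c y k) v j).card ≤ 2 ∧
            (j ≠ a → (Bf G (upd c y k) v j).card ≤ 1) := by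
          intro j
          rw [Bf_upd hadjvy j]
          split_ifs with hjk
          · subst hjk
            have := Finset.card_insert_le y (Bf G c v j)
            exact ⟨by omega, fun _ => by omega⟩
          · by_cases hja : j = a
            · subst hja
              rw [Finset.card_erase_of_mem (mem_Bf.mpr ⟨hadjvy, hcy⟩)]
              exact ⟨by omega, fun h => absurd rfl h⟩
            · have h1 := hrest j hja
              have h2 := Finset.card_erase_le (s := Bf G c v j) (a := y)
              exact ⟨by omega, fun _ => by omega⟩
        have hpatc1 : pat G (upd c y k) v ≤ 1 := by
          apply pat_le_one
          · intro j; exact (hcard' j).1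
          · intro j j' hne hj hj'
            by_cases hja : j = a
            · subst hja
              have := (hcard' j').2 (Ne.symm hne)
              omega
            · have := (hcard' j).2 hja
              omega
        omega
      · -- SINGLE case : contradiction
        exfalso
        obtain ⟨a, p, q, hp, hq, hpq, _, _⟩ := hblock 0
        have ha2 : 2 ≤ (Bf G c v a).card :=
          Finset.one_lt_card.mpr ⟨p, hp, q, hq, hpq⟩
        have ha2' : (Bf G c v a).card = 2 := by
          have : ¬ 3 ≤ (Bf G c v a).card := fun h => h3 ⟨a, h⟩
          omega
        obtain ⟨x1, x2, hx12, hBa⟩ := Finset.card_eq_two.mp ha2'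
        have hall : ∀ ℓ : Fin 5, hasx G c x1 v ℓ := by
          intro ℓ
          obtain ⟨j, p', q', hp', hq', hpq', hh1, hh2⟩ := hblock ℓ
          have hja : j = a := by
            by_contra hja
            exact h22 ⟨j, a, hja, Finset.one_lt_card.mpr ⟨p', hp', q', hq', hpq'⟩, ha2⟩
          subst hja
          rw [hBa] at hp' hq'
          simp only [Finset.mem_insert, Finset.mem_singleton] at hp' hq'
          rcases hp' with rfl | rfl
          · exact hh1
          · rcases hq' with rfl | rfl
            · exact hh2
            · exact absurd rfl hpq'
        have hcs : (CSf G c x1 v).card = 5 := by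
          have : CSf G c x1 v = Finset.univ := by
            apply Finset.eq_univ_of_forall
            intro k
            simp only [CSf, Finset.mem_filter, Finset.mem_univ, true_and]
            exact hall k
          rw [this]
          simp
        have hx1a : x1 ∈ Bf G c v a := by rw [hBa]; simp
        have hadj : G.Adj x1 v := (mem_Bf.mp hx1a).1.symm
        have := csf_le_image (G := G) (c := c) (p := x1) (u := v)
        have h2 := Finset.card_image_le (s := CNf G c x1 v) (f := c)
        have h3 := cnf_le4 (c := c) hΔ hadj
        omega

lemma main (hΔ : ∀ w : V, (G.neighborSet w).ncard ≤ 5) :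
    ∀ (n : ℕ) (c : V → Option (Fin 5)), pGood G c → c v = none → (Nf G c v).card ≤ 4 →
      pat G c v ≤ n →
      ∃ c' : V → Option (Fin 5), pGood G c' ∧
        ∀ u : V, (c' u).isSome ↔ ((c u).isSome ∨ u = v) := by
  intro n
  induction n with
  | zero =>
    intro c hc hv hn4 hpat
    by_cases hgood : ∃ ℓ, Good G c v ℓ
    · obtain ⟨ℓ, hgd⟩ := hgood
      refine ⟨upd c v ℓ, surgery hc hgd, ?_⟩
      intro u
      by_cases hu : u = v
      · subst hu
        simp [upd_self]
      · rw [upd_ne hu]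
        simp [hu]
    · push_neg at hgood
      obtain ⟨c₁, _, _, _, hlt⟩ := step hΔ hc hv hn4 hgood
      omega
  | succ n ih =>
    intro c hc hv hn4 hpat
    by_cases hgood : ∃ ℓ, Good G c v ℓ
    · obtain ⟨ℓ, hgd⟩ := hgood
      refine ⟨upd c v ℓ, surgery hc hgd, ?_⟩
      intro u
      by_cases hu : u = v
      · subst hu
        simp [upd_self]
      · rw [upd_ne hu]
        simp [hu]
    · push_neg at hgood
      obtain ⟨c₁, hpg1, hnone1, hsupp1, hlt⟩ := step hΔ hc hv hn4 hgood
      have hNfeq : Nf G c₁ v = Nf G c v := by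
        ext u
        rw [mem_Nf, mem_Nf]
        exact and_congr_right (fun _ => by rw [hsupp1 u])
      obtain ⟨c', hpg', hsupp'⟩ := ih c₁ hpg1 hnone1 (by rw [hNfeq]; exact hn4) (by omega)
      refine ⟨c', hpg', ?_⟩
      intro u
      rw [hsupp' u, hsupp1 u]

end main

end Stmt4

/-- Extension lemma: a partial acyclic 5-colouring with forest colour classes of a graph of
maximum degree at most 5 can be modified and extended to any uncoloured vertex with at most
4 coloured neighbours. -/
theorem stmt4 {V : Type*} [Fintype V] (G : SimpleGraph V)
    (hΔ : ∀ w : V, (G.neighborSet w).ncard ≤ 5)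
    (c : V → Option (Fin 5)) (hc : pGood G c)
    (v : V) (hv : c v = none)
    (hn : {u | G.Adj v u ∧ (c u).isSome}.ncard ≤ 4) :
    ∃ c' : V → Option (Fin 5), pGood G c' ∧
      ∀ u : V, (c' u).isSome ↔ ((c u).isSome ∨ u = v) := by
  classical
  have hn4 : (Stmt4.Nf G c v).card ≤ 4 := by
    have h : (Stmt4.Nf G c v).card = {x | G.Adj v x ∧ (c x).isSome}.ncard := by
      rw [Stmt4.ncard_setOf_eq_card_filter]
      congr 1
      ext x
      simp [Stmt4.Nf]
    rw [h]
    exact hn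
  exact Stmt4.main hΔ (Stmt4.pat G c v) c hc hv hn4 le_rfl
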